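/- For any Dyck path λ (a south-east lattice path from (0,N) to (N,0) lying weakly below the diagonal), let r_i(λ) be the area contribution of row i (the distance from the i-th south step of λ to the i-th south step of the staircase path, rows numbered north to south) and c_i(λ) the area contribution of column i (numbered right to left). Then the products ∏_{1<i≤N, r_i(λ)=r_{i-1}(λ)+1} (1 + z·t^{-r_i(λ)}) and ∏_{1<i≤N, c_i(λ)=c_{i-1}(λ)+1} (1 + z·t^{-c_i(λ)}) are equal as polynomials in z with coefficients in Laurent polynomials in t. -/

import Mathlib

/-- Positions (0-indexed) of the south steps (`true`) in the word `w`. -/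
def truePositions (w : List Bool) : List ℕ :=
  (List.range w.length).filter (fun k => w.getD k false = true)

/-- The area contribution `r_i(λ)` of row `i` (1-indexed, north to south): the distance
from the `i`-th south step of `λ` to the `i`-th south step of the staircase path. -/
def rstat (w : List Bool) (i : ℕ) : ℕ :=
  2 * (i - 1) - (truePositions w).getD (i - 1) 0

/-- The transpose path: reflect about the diagonal, i.e. reverse the word and
swap south and east steps. -/
def transposeWord (w : List Bool) : List Bool := (w.reverse).map (fun b => !b)

/-- The area contribution `c_i(λ) = r_i(λ*)` of column `i` (numbered right to left). -/
def cstat (w : List Bool) (i : ℕ) : ℕ := rstat (transposeWord w) i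

/-- `w` is (the word of south (`true`) and east (`false`) steps of) a Dyck path from
`(0,N)` to `(N,0)` lying weakly below the diagonal. -/
def IsDyck (N : ℕ) (w : List Bool) : Prop :=
  w.length = 2 * N ∧ w.count true = N ∧
    ∀ k, ((w.take k).count false) ≤ ((w.take k).count true)

lemma truePositions_cons (b : Bool) (t : List Bool) :
    truePositions (b :: t) =
      (if b then [0] else []) ++ (truePositions t).map (· + 1) := by
  unfold truePositions
  rw [List.length_cons, List.range_succ_eq_map]
  have h : List.filter (fun k => (b :: t).getD k false = true)
      (List.map Nat.succ (List.range t.length)) =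
      List.map (fun x => x + 1) (List.filter (fun k => t.getD k false = true)
        (List.range t.length)) := by
    rw [List.filter_map]
    rfl
  simp only [List.filter_cons]
  cases b <;> simp <;> simpa using h

lemma truePositions_length (w : List Bool) :
    (truePositions w).length = w.count true := by
  induction w with
  | nil => rfl
  | cons b t ih =>
    rw [truePositions_cons]
    cases b <;> simp [ih, List.count_cons]

def ppos (w : List Bool) (j : ℕ) : ℕ := (truePositions w).getD j 0

lemma ppos_succ_true (t : List Bool) (j : ℕ) (hj : j < t.count true) :
    ppos (true :: t) (j + 1) = ppos t j + 1 := by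
  unfold ppos
  rw [truePositions_cons]
  simp only [if_pos rfl, List.cons_append, List.nil_append, List.getD_cons_succ]
  rw [List.getD_eq_getElem _ _ (by simpa [truePositions_length] using hj),
      List.getD_eq_getElem _ _ (by simpa [truePositions_length] using hj)]
  simp

lemma ppos_false (t : List Bool) (j : ℕ) (hj : j < t.count true) :
    ppos (false :: t) j = ppos t j + 1 := by
  unfold ppos
  rw [truePositions_cons]
  rw [if_neg (by simp : ¬ (false = true))]
  rw [List.nil_append]
  rw [List.getD_eq_getElem _ _ (by simpa [truePositions_length] using hj),
      List.getD_eq_getElem _ _ (by simpa [truePositions_length] using hj)]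
  simp

lemma ppos_spec (w : List Bool) (j : ℕ) (hj : j < w.count true) :
    ppos w j < w.length ∧ w.getD (ppos w j) false = true ∧
      (w.take (ppos w j)).count true = j := by
  induction w generalizing j with
  | nil => simp at hj
  | cons b t ih =>
    cases b with
    | true =>
      cases j with
      | zero =>
        have h0 : ppos (true :: t) 0 = 0 := by
          unfold ppos; rw [truePositions_cons]; simp
        rw [h0]
        exact ⟨by simp, rfl, by simp⟩
      | succ j =>
        have hj' : j < t.count true := by
          simpa [List.count_cons] using Nat.lt_of_succ_lt_succ (by simpa [List.count_cons] using hj)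
        obtain ⟨h1, h2, h3⟩ := ih j hj'
        rw [ppos_succ_true t j hj']
        refine ⟨by simp [h1], by simpa using h2, ?_⟩
        simp [List.count_cons, h3]
    | false =>
      have hj' : j < t.count true := by simpa [List.count_cons] using hj
      obtain ⟨h1, h2, h3⟩ := ih j hj'
      rw [ppos_false t j hj']
      refine ⟨by simp [h1], by simpa using h2, ?_⟩
      simp [List.count_cons, h3]

lemma ppos_inv (w : List Bool) (k : ℕ) (hk : k < w.length)
    (ht : w.getD k false = true) :
    ppos w ((w.take k).count true) = k := by
  induction w generalizing k with
  | nil => simp at hk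
  | cons b t ih =>
    cases k with
    | zero =>
      have hb : b = true := by simpa using ht
      subst hb
      simp only [List.take_zero, List.count_nil]
      unfold ppos; rw [truePositions_cons]; simp
    | succ k =>
      have hk' : k < t.length := by simpa using hk
      have ht' : t.getD k false = true := by simpa using ht
      have hcount : (t.take k).count true < t.count true := by
        have h1 : (t.take (k+1)).count true ≤ t.count true :=
          List.Sublist.count_le true (List.take_sublist _ _)
        have h2 : t.take (k+1) = t.take k ++ [t[k]] := by
          rw [List.take_succ]
          simp [List.getElem?_eq_getElem hk']
        have h3 : t[k] = true := by
          rw [List.getD_eq_getElem _ _ hk'] at ht'; exact ht'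
        rw [h2, h3] at h1
        simp [List.count_append] at h1
        omega
      cases b with
      | true =>
        have : ((true :: t).take (k+1)).count true = ((t.take k).count true) + 1 := by
          simp [List.count_cons]
        rw [this, ppos_succ_true t _ hcount, ih k hk' ht']
      | false =>
        have : ((false :: t).take (k+1)).count true = (t.take k).count true := by
          simp [List.count_cons]
        rw [this, ppos_false t _ hcount, ih k hk' ht']

def ht (w : List Bool) (k : ℕ) : ℤ :=
  ((w.take k).count true : ℤ) - ((w.take k).count false : ℤ)

lemma ht_append_le (u : List Bool) (b : Bool) (k : ℕ) (hk : k ≤ u.length) :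
    ht (u ++ [b]) k = ht u k := by
  unfold ht
  rw [List.take_append_of_le_length hk]

lemma ht_append_top (u : List Bool) (b : Bool) :
    ht (u ++ [b]) (u.length + 1) = ht u u.length + (if b = true then 1 else -1) := by
  unfold ht
  rw [List.take_of_length_le (by simp), List.take_length]
  cases b <;> simp [List.count_append] <;> ring

lemma ht_succ (w : List Bool) (k : ℕ) (hk : k < w.length) :
    ht w (k + 1) = ht w k + (if w.getD k false = true then 1 else -1) := by
  unfold ht
  rw [List.take_succ, List.getElem?_eq_getElem hk]
  rw [List.getD_eq_getElem _ _ hk]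
  cases h : w[k] <;> simp [List.count_append, h] <;> ring

def pairSet (c : Bool) (w : List Bool) : Finset ℕ :=
  (Finset.range w.length).filter
    (fun k => 0 < k ∧ w.getD (k-1) false = c ∧ w.getD k false = c)

def pairCard (c : Bool) (w : List Bool) (h : ℤ) : ℕ :=
  ((pairSet c w).filter (fun k => ht w k = h)).card

lemma getD_append_lt (u : List Bool) (b : Bool) (k : ℕ) (hk : k < u.length) :
    (u ++ [b]).getD k false = u.getD k false := by
  rw [List.getD_append _ _ _ _ hk]

lemma getD_append_self (u : List Bool) (b : Bool) :
    (u ++ [b]).getD u.length false = b := by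
  rw [List.getD_eq_getElem _ _ (by simp)]
  simp

lemma pairCard_append (c : Bool) (u : List Bool) (b : Bool) (h : ℤ) :
    pairCard c (u ++ [b]) h = pairCard c u h +
      (if 0 < u.length ∧ u.getD (u.length - 1) false = c ∧ b = c ∧ ht u u.length = h
        then 1 else 0) := by
  classical
  unfold pairCard pairSet
  rw [Finset.filter_filter, Finset.filter_filter]
  have hrange : Finset.range (u ++ [b]).length = insert u.length (Finset.range u.length) := by
    simp [Finset.range_add_one]
  have hcongr : Finset.filter (fun k => (0 < k ∧ (u++[b]).getD (k-1) false = c ∧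
        (u++[b]).getD k false = c) ∧ ht (u++[b]) k = h) (Finset.range u.length) =
      Finset.filter (fun k => (0 < k ∧ u.getD (k-1) false = c ∧
        u.getD k false = c) ∧ ht u k = h) (Finset.range u.length) := by
    apply Finset.filter_congr
    intro k hk
    simp only [Finset.mem_range] at hk
    rw [getD_append_lt u b k hk, ht_append_le u b k hk.le]
    rcases Nat.eq_zero_or_pos k with h0 | h0
    · subst h0; simp
    · rw [getD_append_lt u b (k-1) (by omega)]
  have hn : ((0 < u.length ∧ (u++[b]).getD (u.length-1) false = c ∧
        (u++[b]).getD u.length false = c) ∧ ht (u++[b]) u.length = h) ↔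
      (0 < u.length ∧ u.getD (u.length - 1) false = c ∧ b = c ∧ ht u u.length = h) := by
    rw [getD_append_self, ht_append_le u b u.length le_rfl]
    constructor
    · rintro ⟨⟨hpos, hprev, hb⟩, hh⟩
      exact ⟨hpos, by rwa [getD_append_lt u b _ (by omega)] at hprev, hb, hh⟩
    · rintro ⟨hpos, hprev, hb, hh⟩
      exact ⟨⟨hpos, by rwa [getD_append_lt u b _ (by omega)], hb⟩, hh⟩
  rw [hrange, Finset.filter_insert]
  by_cases hc : (0 < u.length ∧ u.getD (u.length - 1) false = c ∧ b = c ∧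
      ht u u.length = h)
  · rw [if_pos (hn.mpr hc), if_pos hc, Finset.card_insert_of_notMem (fun hmem => by
      have := Finset.mem_of_mem_filter _ hmem
      simp at this), hcongr]
  · rw [if_neg (fun hp => hc (hn.mp hp)), if_neg hc, hcongr, Nat.add_zero]

lemma pair_invariant (w : List Bool) (h : ℤ) :
    (pairCard true w h : ℤ) - pairCard false w h =
      (if h ≤ ht w w.length then 1 else 0) - (if h ≤ 0 then 1 else 0)
      + (if 0 < w.length ∧ w.getD 0 false = false ∧ h = 0 then 1 else 0)
      - (if 0 < w.length ∧ w.getD (w.length - 1) false = true ∧ h = ht w w.length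
          then 1 else 0) := by
  induction w using List.reverseRecOn generalizing h with
  | nil => simp [pairCard, pairSet, ht]
  | append_singleton u b ih =>
    rw [pairCard_append, pairCard_append]
    have hlen : (u ++ [b]).length = u.length + 1 := by simp
    simp only [hlen, Nat.add_sub_cancel, getD_append_self, ht_append_top]
    rcases Nat.eq_zero_or_pos u.length with h0 | h0
    · have hu : u = [] := List.length_eq_zero_iff.mp h0
      subst hu
      simp only [List.length_nil, List.nil_append]
      have h1 : ht [] 0 = 0 := rfl
      have h2 : pairCard true [] h = 0 := by simp [pairCard, pairSet]
      have h3 : pairCard false [] h = 0 := by simp [pairCard, pairSet]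
      simp only [h1, h2, h3]
      cases b <;> simp <;> split_ifs <;> omega
    · have hg0 : (u ++ [b]).getD 0 false = u.getD 0 false := getD_append_lt u b 0 h0
      rw [hg0]
      have hih := ih h
      have hcast : ∀ (x : ℕ) (p : Prop) [Decidable p],
          ((x + if p then 1 else 0 : ℕ) : ℤ) = (x : ℤ) + (if p then 1 else 0) := by
        intro x p _; split_ifs <;> simp
      rw [hcast, hcast]
      cases b <;> cases hl : u.getD (u.length - 1) false <;>
        cases hg : u.getD 0 false <;>
        simp only [hl, hg, h0, true_and, false_and, and_true, and_false, if_true, if_false,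
          Bool.true_eq_false, Bool.false_eq_true, eq_self_iff_true, not_true, not_false_iff,
          if_neg, if_pos] at hih ⊢ <;>
        split_ifs at hih ⊢ <;> omega

lemma count_true_add_count_false (l : List Bool) :
    l.count true + l.count false = l.length := by
  induction l with
  | nil => rfl
  | cons b t ih => cases b <;> simp [List.count_cons] <;> omega

lemma dyck_ht_nonneg {N : ℕ} {w : List Bool} (hw : IsDyck N w) (k : ℕ) :
    0 ≤ ht w k := by
  have := hw.2.2 k
  unfold ht
  omega

lemma dyck_ht_top {N : ℕ} {w : List Bool} (hw : IsDyck N w) :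
    ht w w.length = 0 := by
  unfold ht
  rw [List.take_length]
  have h1 := count_true_add_count_false w
  rw [hw.2.1, hw.1] at h1
  rw [hw.2.1]
  omega

lemma dyck_first {N : ℕ} {w : List Bool} (hw : IsDyck N w) (h0 : 0 < w.length) :
    w.getD 0 false = true := by
  have hs := ht_succ w 0 h0
  have h00 : ht w 0 = 0 := by unfold ht; simp
  have hnn := dyck_ht_nonneg hw 1
  cases hb : w.getD 0 false
  · rw [hb] at hs; simp at hs; omega
  · rfl

lemma dyck_last {N : ℕ} {w : List Bool} (hw : IsDyck N w) (h0 : 0 < w.length) :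
    w.getD (w.length - 1) false = false := by
  by_contra hc
  have htrue : w.getD (w.length - 1) false = true := by
    cases hb : w.getD (w.length - 1) false
    · exact absurd hb hc
    · rfl
  have hs := ht_succ w (w.length - 1) (by omega)
  rw [htrue, if_pos rfl] at hs
  have h1 : w.length - 1 + 1 = w.length := by omega
  rw [h1, dyck_ht_top hw] at hs
  have := dyck_ht_nonneg hw (w.length - 1)
  omega

lemma dyck_pairCard_eq {N : ℕ} {w : List Bool} (hw : IsDyck N w) (h : ℤ) :
    pairCard true w h = pairCard false w h := by
  have hinv := pair_invariant w h
  rcases Nat.eq_zero_or_pos w.length with h0 | h0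
  · rw [dyck_ht_top hw] at hinv
    simp [h0] at hinv
    omega
  · rw [dyck_ht_top hw, dyck_first hw h0, dyck_last hw h0] at hinv
    simp at hinv
    omega

lemma dyck_prod_pair {N : ℕ} {w : List Bool} (hw : IsDyck N w)
    {M : Type*} [CommMonoid M] (F : ℤ → M) :
    ∏ k ∈ pairSet true w, F (ht w k) = ∏ k ∈ pairSet false w, F (ht w k) := by
  classical
  have hms : (pairSet true w).val.map (ht w) = (pairSet false w).val.map (ht w) := by
    ext h
    rw [Multiset.count_map, Multiset.count_map]
    have e1 : ∀ c : Bool, Multiset.card (Multiset.filter (fun a => h = ht w a) (pairSet c w).val)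
        = pairCard c w h := by
      intro c
      unfold pairCard
      rw [Finset.card, Finset.filter_val]
      congr 1
      apply Multiset.filter_congr
      intro k _
      exact ⟨fun hh => hh.symm, fun hh => hh.symm⟩
    rw [e1 true, e1 false, dyck_pairCard_eq hw]
  calc ∏ k ∈ pairSet true w, F (ht w k)
      = (((pairSet true w).val.map (ht w)).map F).prod := by
        rw [Multiset.map_map]; rfl
    _ = (((pairSet false w).val.map (ht w)).map F).prod := by rw [hms]
    _ = ∏ k ∈ pairSet false w, F (ht w k) := by
        rw [Multiset.map_map]; rfl

lemma ppos_le {N : ℕ} {w : List Bool} (hw : IsDyck N w) {j : ℕ} (hj : j < N) :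
    ppos w j ≤ 2 * j ∧ (w.take (ppos w j)).count false = ppos w j - j := by
  have hj' : j < w.count true := by rw [hw.2.1]; exact hj
  obtain ⟨hlt, htr, hcount⟩ := ppos_spec w j hj'
  have hdyck := hw.2.2 (ppos w j)
  have hlen : (w.take (ppos w j)).length = ppos w j := by
    rw [List.length_take]; omega
  have hsum := count_true_add_count_false (w.take (ppos w j))
  omega

lemma count_take_succ_true {w : List Bool} {k : ℕ} (hk : k < w.length)
    (ht : w.getD k false = true) :
    (w.take (k+1)).count true = (w.take k).count true + 1 := by
  rw [List.take_succ, List.getElem?_eq_getElem hk]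
  rw [List.getD_eq_getElem _ _ hk] at ht
  simp [List.count_append, ht]

lemma count_take_lt_of_true {w : List Bool} {k : ℕ} (hk : k < w.length)
    (ht : w.getD k false = true) :
    (w.take k).count true < w.count true := by
  have h1 : (w.take (k+1)).count true ≤ w.count true :=
    List.Sublist.count_le true (List.take_sublist _ _)
  rw [count_take_succ_true hk ht] at h1
  omega

lemma prod_rows {N : ℕ} {w : List Bool} (hw : IsDyck N w)
    {M : Type*} [CommMonoid M] (F : ℤ → M) :
    ∏ i ∈ (Finset.Icc 2 N).filter (fun i => rstat w i = rstat w (i - 1) + 1),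
      F ((rstat w i : ℤ))
    = ∏ k ∈ pairSet true w, F (ht w k) := by
  classical
  have hrs : ∀ i : ℕ, rstat w i = 2 * (i-1) - ppos w (i-1) := fun i => rfl
  apply Finset.prod_nbij' (i := fun i => ppos w (i-1))
    (j := fun k => (w.take k).count true + 1)
  · -- hi : maps into pairSet true w
    intro i hi
    simp only [Finset.mem_filter, Finset.mem_Icc] at hi
    obtain ⟨⟨h2i, hiN⟩, hcond⟩ := hi
    have hj1 : i - 1 < N := by omega
    have hj0 : i - 2 < N := by omega
    obtain ⟨hb1, hb1'⟩ := ppos_le hw hj1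
    obtain ⟨hb0, hb0'⟩ := ppos_le hw hj0
    have hi1 : (i - 1) - 1 = i - 2 := by omega
    rw [hrs i, hrs (i-1), hi1] at hcond
    have hstep : ppos w (i-1) = ppos w (i-2) + 1 := by omega
    have hcnt1 : i - 1 < w.count true := by rw [hw.2.1]; omega
    have hcnt0 : i - 2 < w.count true := by rw [hw.2.1]; omega
    obtain ⟨hlt1, htr1, -⟩ := ppos_spec w (i-1) hcnt1
    obtain ⟨hlt0, htr0, -⟩ := ppos_spec w (i-2) hcnt0
    simp only [pairSet, Finset.mem_filter, Finset.mem_range]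
    refine ⟨hlt1, by omega, ?_, htr1⟩
    have : ppos w (i-1) - 1 = ppos w (i-2) := by omega
    rw [this]; exact htr0
  · -- hj : inverse maps into s
    intro k hk
    simp only [pairSet, Finset.mem_filter, Finset.mem_range] at hk
    obtain ⟨hklen, hkpos, hprev, hcur⟩ := hk
    have hk1len : k - 1 < w.length := by omega
    have htk : (w.take k).count true = (w.take (k-1)).count true + 1 := by
      have := count_take_succ_true hk1len hprev
      have hkk : k - 1 + 1 = k := by omega
      rw [hkk] at this
      exact this
    have htkN : (w.take k).count true < N := by
      have := count_take_lt_of_true hklen hcur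
      rw [hw.2.1] at this; exact this
    have hp1 : ppos w ((w.take k).count true) = k := ppos_inv w k hklen hcur
    have hp0 : ppos w ((w.take (k-1)).count true) = k - 1 := ppos_inv w (k-1) hk1len hprev
    simp only [Finset.mem_filter, Finset.mem_Icc]
    set t := (w.take k).count true with htdef
    refine ⟨⟨by omega, by omega⟩, ?_⟩
    have ht0 : t + 1 - 1 = t := by omega
    rw [ht0, hrs (t+1), hrs t]
    simp only [ht0]
    have htm : t - 1 = (w.take (k-1)).count true := by omega
    obtain ⟨hbt, -⟩ := ppos_le hw htkN
    have htmN : t - 1 < N := by omega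
    obtain ⟨hbt', -⟩ := ppos_le hw htmN
    have e1 : ppos w (t-1) = k - 1 := by rw [htm]; exact hp0
    rw [hp1, e1]
    rw [hp1] at hbt
    rw [e1] at hbt'
    omega
  · -- left_inv
    intro i hi
    simp only [Finset.mem_filter, Finset.mem_Icc] at hi
    obtain ⟨⟨h2i, hiN⟩, -⟩ := hi
    have hcnt1 : i - 1 < w.count true := by rw [hw.2.1]; omega
    obtain ⟨-, -, hcount⟩ := ppos_spec w (i-1) hcnt1
    rw [hcount]; omega
  · -- right_inv
    intro k hk
    simp only [pairSet, Finset.mem_filter, Finset.mem_range] at hk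
    obtain ⟨hklen, hkpos, hprev, hcur⟩ := hk
    have := ppos_inv w k hklen hcur
    simpa using this
  · -- values
    intro i hi
    simp only [Finset.mem_filter, Finset.mem_Icc] at hi
    obtain ⟨⟨h2i, hiN⟩, -⟩ := hi
    obtain ⟨m, rfl⟩ : ∃ m, i = m + 2 := ⟨i - 2, by omega⟩
    congr 1
    have hred : m + 2 - 1 = m + 1 := rfl
    have hj1 : m + 1 < N := by omega
    obtain ⟨hb1, hb1'⟩ := ppos_le hw hj1
    have hcnt1 : m + 1 < w.count true := by rw [hw.2.1]; omega
    obtain ⟨hlt1, -, hcount⟩ := ppos_spec w (m+1) hcnt1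
    have key : rstat w (m+2) + ppos w (m+1) = 2 * (m+1) := by
      have h := hrs (m+2)
      rw [hred] at h
      omega
    have hple : m + 1 ≤ ppos w (m+1) := by
      calc m + 1 = (w.take (ppos w (m+1))).count true := hcount.symm
        _ ≤ (w.take (ppos w (m+1))).length := List.count_le_length
        _ ≤ ppos w (m+1) := List.length_take_le _ _
    rw [hred]
    unfold ht
    rw [hcount, hb1']
    omega

lemma take_reverse' {α : Type*} (l : List α) (k : ℕ) (hk : k ≤ l.length) :
    (l.reverse).take k = (l.drop (l.length - k)).reverse := by
  calc (l.reverse).take k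
      = ((l.drop (l.length - k)).reverse ++ (l.take (l.length - k)).reverse).take k := by
        conv_lhs => rw [← List.take_append_drop (l.length - k) l, List.reverse_append]
    _ = (l.drop (l.length - k)).reverse := List.take_left' (by
        rw [List.length_reverse, List.length_drop]; omega)

lemma count_take_add_count_drop {α : Type*} [BEq α] (l : List α) (m : ℕ) (c : α) :
    (l.take m).count c + (l.drop m).count c = l.count c := by
  conv_rhs => rw [← List.take_append_drop m l]
  rw [List.count_append]

lemma count_map_not (l : List Bool) (c : Bool) :
    (l.map (fun b => !b)).count c = l.count (!c) := by
  have := List.count_map_of_injective (x := !c) l (fun b => !b)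
    (by intro a b; cases a <;> cases b <;> simp)
  simpa using this

lemma transpose_length (w : List Bool) : (transposeWord w).length = w.length := by
  simp [transposeWord]

lemma transpose_take_count (w : List Bool) (k : ℕ) (hk : k ≤ w.length) (c : Bool) :
    ((transposeWord w).take k).count c = w.count (!c) - (w.take (w.length - k)).count (!c) := by
  unfold transposeWord
  rw [← List.map_take, take_reverse' w k hk, count_map_not, List.count_reverse]
  have := count_take_add_count_drop w (w.length - k) (!c)
  omega

lemma transpose_getD (w : List Bool) (j : ℕ) (hj : j < w.length) :
    (transposeWord w).getD j false = !(w.getD (w.length - 1 - j) false) := by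
  unfold transposeWord
  have hj' : j < ((w.reverse).map (fun b => !b)).length := by simpa using hj
  rw [List.getD_eq_getElem _ _ hj',
      List.getD_eq_getElem _ _ (show w.length - 1 - j < w.length by omega)]
  rw [List.getElem_map, List.getElem_reverse]

lemma transpose_isDyck {N : ℕ} {w : List Bool} (hw : IsDyck N w) :
    IsDyck N (transposeWord w) := by
  obtain ⟨hlen, hcnt, hpre⟩ := hw
  have htot := count_true_add_count_false w
  have hcf : w.count false = N := by omega
  refine ⟨by rwa [transpose_length], ?_, ?_⟩
  · rw [transposeWord, count_map_not, List.count_reverse]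
    simpa using hcf
  · intro k
    rcases le_or_gt k (transposeWord w).length with hk | hk
    · rw [transpose_length] at hk
      rw [transpose_take_count w k hk true, transpose_take_count w k hk false]
      have h1 := hpre (w.length - k)
      have h2 := count_true_add_count_false (w.take (w.length - k))
      have h3 : (w.take (w.length - k)).count true ≤ w.count true :=
        List.Sublist.count_le true (List.take_sublist _ _)
      have h4 : (w.take (w.length - k)).count false ≤ w.count false :=
        List.Sublist.count_le false (List.take_sublist _ _)
      simp only [Bool.not_true, Bool.not_false]
      omega
    · rw [List.take_of_length_le hk.le]
      rw [transposeWord, count_map_not, count_map_not, List.count_reverse, List.count_reverse]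
      simp only [Bool.not_true, Bool.not_false]
      omega

lemma ht_transpose {N : ℕ} {w : List Bool} (hw : IsDyck N w) (k : ℕ) (hk : k ≤ w.length) :
    ht (transposeWord w) k = ht w (w.length - k) := by
  obtain ⟨hlen, hcnt, hpre⟩ := hw
  have htot := count_true_add_count_false w
  unfold ht
  rw [transpose_take_count w k hk true, transpose_take_count w k hk false]
  have h2 := count_true_add_count_false (w.take (w.length - k))
  have h3 : (w.take (w.length - k)).count true ≤ w.count true :=
    List.Sublist.count_le true (List.take_sublist _ _)
  have h4 : (w.take (w.length - k)).count false ≤ w.count false :=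
    List.Sublist.count_le false (List.take_sublist _ _)
  simp only [Bool.not_true, Bool.not_false]
  omega

lemma prod_transpose {N : ℕ} {w : List Bool} (hw : IsDyck N w)
    {M : Type*} [CommMonoid M] (F : ℤ → M) :
    ∏ k ∈ pairSet true (transposeWord w), F (ht (transposeWord w) k)
    = ∏ k ∈ pairSet false w, F (ht w k) := by
  classical
  apply Finset.prod_nbij' (i := fun k => w.length - k) (j := fun k => w.length - k)
  · intro k hk
    simp only [pairSet, Finset.mem_filter, Finset.mem_range, transpose_length] at hk
    obtain ⟨hklen, hkpos, hprev, hcur⟩ := hk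
    rw [transpose_getD w k hklen] at hcur
    rw [transpose_getD w (k-1) (by omega)] at hprev
    have e1 : w.length - 1 - k = w.length - k - 1 := by omega
    have e2 : w.length - 1 - (k - 1) = w.length - k := by omega
    rw [e1] at hcur
    rw [e2] at hprev
    simp only [pairSet, Finset.mem_filter, Finset.mem_range]
    refine ⟨by omega, by omega, ?_, ?_⟩
    · cases hb : w.getD (w.length - k - 1) false
      · rfl
      · rw [hb] at hcur; simp at hcur
    · cases hb : w.getD (w.length - k) false
      · rfl
      · rw [hb] at hprev; simp at hprev
  · intro k hk
    simp only [pairSet, Finset.mem_filter, Finset.mem_range] at hk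
    obtain ⟨hklen, hkpos, hprev, hcur⟩ := hk
    simp only [pairSet, Finset.mem_filter, Finset.mem_range, transpose_length]
    refine ⟨by omega, by omega, ?_, ?_⟩
    · rw [transpose_getD w (w.length - k - 1) (by omega)]
      have e : w.length - 1 - (w.length - k - 1) = k := by omega
      rw [e, hcur]
      rfl
    · rw [transpose_getD w (w.length - k) (by omega)]
      have e : w.length - 1 - (w.length - k) = k - 1 := by omega
      rw [e, hprev]
      rfl
  · intro k hk
    simp only [pairSet, Finset.mem_filter, Finset.mem_range, transpose_length] at hk
    omega
  · intro k hk
    simp only [pairSet, Finset.mem_filter, Finset.mem_range] at hk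
    omega
  · intro k hk
    simp only [pairSet, Finset.mem_filter, Finset.mem_range, transpose_length] at hk
    rw [ht_transpose hw k (by omega)]

theorem extended_delta_stmt0 (N : ℕ) (w : List Bool) (hw : IsDyck N w) :
    (∏ i ∈ (Finset.Icc 2 N).filter (fun i => rstat w i = rstat w (i - 1) + 1),
        (1 + Polynomial.C (LaurentPolynomial.T (R := ℚ) (-(rstat w i : ℤ))) * Polynomial.X)) =
    (∏ i ∈ (Finset.Icc 2 N).filter (fun i => cstat w i = cstat w (i - 1) + 1),
        (1 + Polynomial.C (LaurentPolynomial.T (R := ℚ) (-(cstat w i : ℤ))) * Polynomial.X)) := by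
  have hwt := transpose_isDyck hw
  set F : ℤ → Polynomial (LaurentPolynomial ℚ) :=
    fun z => 1 + Polynomial.C (LaurentPolynomial.T (R := ℚ) (-z)) * Polynomial.X with hF
  have hL := prod_rows hw F
  have hR := prod_rows hwt F
  have hT := prod_transpose hw F
  have hP := dyck_prod_pair hw F
  calc (∏ i ∈ (Finset.Icc 2 N).filter (fun i => rstat w i = rstat w (i - 1) + 1),
        (1 + Polynomial.C (LaurentPolynomial.T (R := ℚ) (-(rstat w i : ℤ))) * Polynomial.X))
      = ∏ i ∈ (Finset.Icc 2 N).filter (fun i => rstat w i = rstat w (i - 1) + 1),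
          F ((rstat w i : ℤ)) := rfl
    _ = ∏ k ∈ pairSet true w, F (ht w k) := hL
    _ = ∏ k ∈ pairSet false w, F (ht w k) := hP
    _ = ∏ k ∈ pairSet true (transposeWord w), F (ht (transposeWord w) k) := hT.symm
    _ = ∏ i ∈ (Finset.Icc 2 N).filter
          (fun i => rstat (transposeWord w) i = rstat (transposeWord w) (i - 1) + 1),
          F ((rstat (transposeWord w) i : ℤ)) := hR.symm
    _ = _ := rfl
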